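/- Let H be a Hom-finite k-linear hereditary abelian category with Serre duality τ, and let E be an object such that for every indecomposable X and every m ≥ 0: Hom(E,X) ≠ 0 ⟹ Hom(E, τ⁻ᵐX) ≠ 0, and Hom(X,E) ≠ 0 ⟹ Hom(τᵐX, E) ≠ 0. Then any object T with Ext¹(T,T) = 0 contains at most one indecomposable direct summand from the τ-orbit {τᵐE : m ∈ ℤ} of E. -/

import Mathlib

open CategoryTheory CategoryTheory.Limits

/-- The m-th power (m ∈ ℤ) of an autoequivalence applied to an object. -/
def zpowObj {C : Type*} [Category C] (τ : C ≌ C) : ℤ → C → C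
  | Int.ofNat m, X => (fun Y => τ.functor.obj Y)^[m] X
  | Int.negSucc m, X => (fun Y => τ.inverse.obj Y)^[m + 1] X

/-- `X` is a direct summand of `T`. -/
def IsDirectSummand {C : Type*} [Category C] (X T : C) : Prop :=
  ∃ (s : X ⟶ T) (r : T ⟶ X), s ≫ r = 𝟙 X

section Aux
variable {C : Type*} [Category C] [Abelian C] (τ : C ≌ C)

/-- nonzero hom relation -/
def NZ (X Y : C) : Prop := ∃ f : X ⟶ Y, f ≠ 0

lemma NZ.of_iso {X X' Y Y' : C} (e1 : X ≅ X') (e2 : Y ≅ Y') (h : NZ X Y) : NZ X' Y' := by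
  obtain ⟨f, hf⟩ := h
  refine ⟨e1.inv ≫ f ≫ e2.hom, fun h0 => hf ?_⟩
  have : e1.hom ≫ (e1.inv ≫ f ≫ e2.hom) ≫ e2.inv = f := by simp
  rw [h0] at this; simpa using this.symm

lemma NZ.map_functor {X Y : C} (h : NZ X Y) : NZ (τ.functor.obj X) (τ.functor.obj Y) := by
  obtain ⟨f, hf⟩ := h
  exact ⟨τ.functor.map f, fun h0 => hf (τ.functor.zero_of_map_zero f h0)⟩

lemma NZ.map_inverse {X Y : C} (h : NZ X Y) : NZ (τ.inverse.obj X) (τ.inverse.obj Y) := by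
  obtain ⟨f, hf⟩ := h
  exact ⟨τ.inverse.map f, fun h0 => hf (τ.inverse.zero_of_map_zero f h0)⟩

def zpow_succ_iso (n : ℤ) (X : C) :
    zpowObj τ (n + 1) X ≅ τ.functor.obj (zpowObj τ n X) := by
  cases n with
  | ofNat m =>
      have : zpowObj τ (Int.ofNat m + 1) X = τ.functor.obj (zpowObj τ (Int.ofNat m) X) := by
        show (fun Y => τ.functor.obj Y)^[m + 1] X = _
        rw [Function.iterate_succ_apply']; rfl
      exact eqToIso this
  | negSucc m =>
    cases m with
    | zero =>
      show zpowObj τ 0 X ≅ τ.functor.obj (zpowObj τ (Int.negSucc 0) X)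
      exact (τ.counitIso.symm.app X)
    | succ m =>
      have e : zpowObj τ (Int.negSucc (m+1)) X
          = τ.inverse.obj (zpowObj τ (Int.negSucc m) X) := by
        show (fun Y => τ.inverse.obj Y)^[m + 2] X = _
        rw [Function.iterate_succ_apply']; rfl
      have : zpowObj τ (Int.negSucc (m+1) + 1) X = zpowObj τ (Int.negSucc m) X := rfl
      rw [this, e]
      exact (τ.counitIso.symm.app _)

def zpow_pred_iso (n : ℤ) (X : C) :
    zpowObj τ (n - 1) X ≅ τ.inverse.obj (zpowObj τ n X) := by
  have e := zpow_succ_iso τ (n - 1) X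
  rw [sub_add_cancel] at e
  calc zpowObj τ (n - 1) X ≅ τ.inverse.obj (τ.functor.obj (zpowObj τ (n-1) X)) :=
        τ.unitIso.app _
    _ ≅ τ.inverse.obj (zpowObj τ n X) := τ.inverse.mapIso e.symm

lemma NZ.zpow_shift {X Y : C} (a b : ℤ) (k : ℤ) (h : NZ (zpowObj τ a X) (zpowObj τ b Y)) :
    NZ (zpowObj τ (a + k) X) (zpowObj τ (b + k) Y) := by
  induction k using Int.induction_on with
  | zero => simpa using h
  | succ i ih =>
      have := (ih.map_functor τ).of_iso (zpow_succ_iso τ (a+i) X).symm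
        (zpow_succ_iso τ (b+i) Y).symm
      have ea : a + (i+1 : ℤ) = (a + i) + 1 := by ring
      have eb : b + (i+1 : ℤ) = (b + i) + 1 := by ring
      rw [ea, eb]; exact this
  | pred i ih =>
      have := (ih.map_inverse τ).of_iso (zpow_pred_iso τ (a + (-i)) X).symm
        (zpow_pred_iso τ (b + (-i)) Y).symm
      rw [show a + (-(i:ℤ) - 1) = a + -(i:ℤ) - 1 by ring,
        show b + (-(i:ℤ) - 1) = b + -(i:ℤ) - 1 by ring]
      exact this

end Aux

section Main
variable {C : Type*} [Category C] [Abelian C]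

lemma key_contra (τ : C ≌ C) (E : C) (hE : Indecomposable E)
    (h2 : ∀ (X : C) (m : ℕ), Indecomposable X →
      (∃ f : X ⟶ E, f ≠ 0) → ∃ f : zpowObj τ (m : ℤ) X ⟶ E, f ≠ 0)
    (T : C) (hT : ∀ f : T ⟶ τ.functor.obj T, f = 0)
    (a b : ℤ) (hab : b < a)
    (hsa : ∃ (s : zpowObj τ a E ⟶ T) (r : T ⟶ zpowObj τ a E), s ≫ r = 𝟙 _)
    (hsb : ∃ (s : zpowObj τ b E ⟶ T) (r : T ⟶ zpowObj τ b E), s ≫ r = 𝟙 _) :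
    False := by
  obtain ⟨s₁, r₁, hsr₁⟩ := hsa
  obtain ⟨s₂, r₂, hsr₂⟩ := hsb
  have hEne : (𝟙 E : E ⟶ E) ≠ 0 := fun h => hE.1 ((Limits.IsZero.iff_id_eq_zero E).mpr h)
  set m : ℕ := (a - b - 1).toNat with hm
  have hmz : (m : ℤ) = a - b - 1 := Int.toNat_of_nonneg (by omega)
  obtain ⟨f, hf⟩ := h2 E m hE ⟨𝟙 E, hEne⟩
  have hnz : NZ (zpowObj τ (m : ℤ) E) (zpowObj τ 0 E) := ⟨f, hf⟩
  have := hnz.zpow_shift τ (m : ℤ) 0 (b + 1)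
  rw [show (m : ℤ) + (b + 1) = a by omega, zero_add] at this
  obtain ⟨g, hg⟩ := this.of_iso (Iso.refl _) (zpow_succ_iso τ b E)
  have hgz : r₁ ≫ g ≫ τ.functor.map s₂ = 0 := hT _
  apply hg
  have : s₁ ≫ (r₁ ≫ g ≫ τ.functor.map s₂) ≫ τ.functor.map r₂ = g := by
    simp only [Category.assoc, ← Functor.map_comp, hsr₂]
    rw [← Category.assoc, hsr₁]
    simp
  rw [hgz] at this
  simpa using this.symm

end Main


/-- let `E` be an indecomposable object of a hereditary abelian category
with Serre duality `Ext¹(X,Y) ≅ D Hom(Y,τX)` such that nonzero Homs to/from `E`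
propagate along the τ-orbit. If `T` is extension-free — via Serre duality,
`Ext¹(T,T) = D Hom(T,τT) = 0`, i.e. every morphism `T ⟶ τT` is zero — then `T` has at
most one indecomposable direct summand in the τ-orbit `{τᵐE : m ∈ ℤ}` of `E`: if
`τ^{m₁}E` and `τ^{m₂}E` are both direct summands of `T` then `m₁ = m₂`. -/
theorem at_most_one_summand_in_tau_orbit {C : Type*} [Category C] [Abelian C]
    (τ : C ≌ C) (E : C) (hE : Indecomposable E)
    (h1 : ∀ (X : C) (m : ℕ), Indecomposable X →
      (∃ f : E ⟶ X, f ≠ 0) → ∃ f : E ⟶ zpowObj τ (-(m : ℤ)) X, f ≠ 0)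
    (h2 : ∀ (X : C) (m : ℕ), Indecomposable X →
      (∃ f : X ⟶ E, f ≠ 0) → ∃ f : zpowObj τ (m : ℤ) X ⟶ E, f ≠ 0)
    (T : C) (hT : ∀ f : T ⟶ τ.functor.obj T, f = 0)
    (m₁ m₂ : ℤ) (hs1 : IsDirectSummand (zpowObj τ m₁ E) T)
    (hs2 : IsDirectSummand (zpowObj τ m₂ E) T) :
    m₁ = m₂ := by
  rcases lt_trichotomy m₁ m₂ with h | h | h
  · exact absurd (key_contra τ E hE h2 T hT m₂ m₁ h hs2 hs1) not_false
  · exact h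
  · exact absurd (key_contra τ E hE h2 T hT m₁ m₂ h hs1 hs2) not_false
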